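/- Let ξ be a centered real random variable with Eξ² = 1 and Eξ⁴ = x where 1 ≤ x < (3√3)/2 − 3/2. Then P(ξ > 0) ≥ 1/2 − (1/2)·√((x−1)/(x+3)). -/

import Mathlib

open MeasureTheory ProbabilityTheory Real

set_option maxHeartbeats 1000000

private lemma stmt6_integrable_sq {Ω : Type*} [MeasureSpace Ω]
    [IsProbabilityMeasure (ℙ : Measure Ω)]
    (ξ : Ω → ℝ) (hmeas : Measurable ξ) (hint4 : Integrable (fun ω => (ξ ω) ^ 4)) :
    Integrable (fun ω => (ξ ω) ^ 2) := by
  refine (hint4.add (integrable_const 1)).mono'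
    ((hmeas.pow_const 2).aestronglyMeasurable) ?_
  filter_upwards with ω
  simp only [Pi.add_apply]
  rw [Real.norm_eq_abs, abs_of_nonneg (by positivity)]
  nlinarith [sq_nonneg ((ξ ω)^2 - 1)]

private lemma stmt6_aux {Ω : Type*} [MeasureSpace Ω] [IsProbabilityMeasure (ℙ : Measure Ω)]
    (ξ : Ω → ℝ) (hmeas : Measurable ξ)
    (hint : Integrable ξ) (hint4 : Integrable (fun ω => (ξ ω) ^ 4))
    (hmean : (∫ ω, ξ ω) = 0) (h2 : (∫ ω, (ξ ω) ^ 2) = 1)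
    (a : ℝ) (ha0 : 0 < a) (ha1 : a < 1) (hg : 2 ≤ a^6 + 3*a^4)
    (h4 : (∫ ω, (ξ ω) ^ 4) = a^2 + 1/a^2 - 1) :
    a^2/(1+a^2) ≤ (ℙ {ω | 0 < ξ ω}).toReal := by
  have hAm : MeasurableSet {ω | 0 < ξ ω} := hmeas measurableSet_Ioi
  set A : Set Ω := {ω | 0 < ξ ω} with hAdef
  set lam : ℝ := a^4/((1-a^2)*(1+a^2)^3) with hlamd
  set γ : ℝ := (a^6+3*a^4-2)/(a^2*(1+a^2)) with hγd
  set δ : ℝ := γ - 3*a^2 + 3/a^2 with hδd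
  have ha2 : a^2 < 1 := by nlinarith
  have hlam : 0 < lam := by
    rw [hlamd]; exact div_pos (by positivity) (mul_pos (by nlinarith) (by positivity))
  have hγ : 0 ≤ γ := by
    rw [hγd]; apply div_nonneg (by nlinarith) (by positivity)
  have hδ : 0 ≤ δ := by
    have h3 : 3*a^2 ≤ 3/a^2 := by
      rw [le_div_iff₀ (by positivity)]; nlinarith
    rw [hδd]; linarith
  have hId : ∀ t : ℝ, 1 + lam*((t+a)^2*(t^2-2*a*t+γ))
      = lam*((t-1/a)^2*(t^2+2/a*t+δ)) := by
    intro t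
    rw [hδd, hγd, hlamd]
    have h1 : (1:ℝ) - a^2 ≠ 0 := by nlinarith
    have h2 : a ≠ 0 := ne_of_gt ha0
    field_simp
    ring
  have hval : a^2/(1+a^2) = (-lam)*(a^2+1/a^2-1) + ((-lam*(γ-3*a^2))*1
      + ((-lam*(2*a*(γ-a^2)))*0 + (-lam*(a^2*γ)))) := by
    rw [hγd, hlamd]
    have h1 : (1:ℝ) - a^2 ≠ 0 := by nlinarith
    have h2 : a ≠ 0 := ne_of_gt ha0
    field_simp
    ring
  clear_value lam γ δ
  clear hlamd hγd hδd
  have hQeq : ∀ t : ℝ, (-lam)*t^4 + ((-lam*(γ-3*a^2))*t^2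
      + ((-lam*(2*a*(γ-a^2)))*t + (-lam*(a^2*γ))))
      = -lam*((t+a)^2*(t^2-2*a*t+γ)) := fun t => by ring
  -- pointwise bound
  have key : ∀ ω, (-lam)*(ξ ω)^4 + ((-lam*(γ-3*a^2))*(ξ ω)^2
      + ((-lam*(2*a*(γ-a^2)))*(ξ ω) + (-lam*(a^2*γ))))
      ≤ A.indicator (fun _ => (1:ℝ)) ω := by
    intro ω
    rw [hQeq (ξ ω)]
    by_cases h : ω ∈ A
    · rw [Set.indicator_of_mem h]
      have ht : 0 < ξ ω := h
      have h1 := hId (ξ ω)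
      have h6 : 0 ≤ 2/a*(ξ ω) := mul_nonneg (by positivity) ht.le
      have h5 : 0 ≤ (ξ ω)^2+2/a*(ξ ω)+δ := by
        have := sq_nonneg (ξ ω); linarith
      nlinarith [mul_nonneg (mul_nonneg (sq_nonneg (ξ ω - 1/a)) h5) hlam.le]
    · rw [Set.indicator_of_notMem h]
      have ht : ξ ω ≤ 0 := not_lt.1 h
      have h5 : 0 ≤ (ξ ω)^2-2*a*(ξ ω)+γ := by
        nlinarith [mul_nonneg ha0.le (neg_nonneg.2 ht), sq_nonneg (ξ ω)]
      nlinarith [mul_nonneg (mul_nonneg (sq_nonneg (ξ ω + a)) h5) hlam.le]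
  have hint2 : Integrable (fun ω => (ξ ω)^2) := stmt6_integrable_sq ξ hmeas hint4
  have hintInd : Integrable (A.indicator (fun _ => (1:ℝ))) :=
    (integrable_const 1).indicator hAm
  have e4 : Integrable (fun ω => (-lam)*(ξ ω)^4) := hint4.const_mul _
  have e2 : Integrable (fun ω => (-lam*(γ-3*a^2))*(ξ ω)^2) := hint2.const_mul _
  have e1 : Integrable (fun ω => (-lam*(2*a*(γ-a^2)))*(ξ ω)) := hint.const_mul _
  have e0 : Integrable (fun _ : Ω => -lam*(a^2*γ)) := integrable_const _
  have eC : Integrable (fun ω => (-lam*(2*a*(γ-a^2)))*(ξ ω) + (-lam*(a^2*γ))) :=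
    e1.add e0
  have eB : Integrable (fun ω => (-lam*(γ-3*a^2))*(ξ ω)^2
      + ((-lam*(2*a*(γ-a^2)))*(ξ ω) + (-lam*(a^2*γ)))) := e2.add eC
  have hQint : Integrable (fun ω => (-lam)*(ξ ω)^4 + ((-lam*(γ-3*a^2))*(ξ ω)^2
      + ((-lam*(2*a*(γ-a^2)))*(ξ ω) + (-lam*(a^2*γ))))) :=
    e4.add eB
  have hle : (∫ ω, ((-lam)*(ξ ω)^4 + ((-lam*(γ-3*a^2))*(ξ ω)^2
      + ((-lam*(2*a*(γ-a^2)))*(ξ ω) + (-lam*(a^2*γ))))))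
      ≤ ∫ ω, A.indicator (fun _ => (1:ℝ)) ω :=
    integral_mono hQint hintInd key
  have hIv : (∫ ω, ((-lam)*(ξ ω)^4 + ((-lam*(γ-3*a^2))*(ξ ω)^2
      + ((-lam*(2*a*(γ-a^2)))*(ξ ω) + (-lam*(a^2*γ))))))
      = (-lam)*(a^2+1/a^2-1) + ((-lam*(γ-3*a^2))*1
      + ((-lam*(2*a*(γ-a^2)))*0 + (-lam*(a^2*γ)))) := by
    rw [integral_add e4 eB, integral_add e2 eC, integral_add e1 e0,
      integral_const_mul, integral_const_mul, integral_const_mul,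
      h4, h2, hmean, integral_const]
    simp
  have hIndEq : (∫ ω, A.indicator (fun _ => (1:ℝ)) ω) = (ℙ A).toReal := by
    rw [integral_indicator hAm]
    simp
    rfl
  rw [hIndEq, hIv] at hle
  linarith [hle, hval.ge]

private lemma stmt6_exists_a (x : ℝ) (hx1 : 1 < x) (hx2 : x < 3 * Real.sqrt 3 / 2 - 3 / 2) :
    ∃ a : ℝ, 0 < a ∧ a < 1 ∧ 2 ≤ a^6 + 3*a^4 ∧ a^2 + 1/a^2 - 1 = x := by
  have hr : Real.sqrt 3 ^ 2 = 3 := Real.sq_sqrt (by norm_num)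
  have hr1 : 1 < Real.sqrt 3 := by nlinarith [Real.sqrt_nonneg 3]
  have hr2 : Real.sqrt 3 < 2 := by nlinarith [Real.sqrt_nonneg 3]
  set s : ℝ := Real.sqrt ((x+1)^2 - 4) with hs
  have hs0 : 0 ≤ s := Real.sqrt_nonneg _
  have hs2 : s^2 = (x+1)^2 - 4 := Real.sq_sqrt (by nlinarith)
  set u : ℝ := (x + 1 - s)/2 with hu
  have hsx : s < x + 1 := by nlinarith
  have hu0 : 0 < u := by rw [hu]; linarith
  have hsx1 : x - 1 < s := by nlinarith
  have hu1 : u < 1 := by rw [hu]; linarith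
  have hux : u^2 + 1 = (x+1)*u := by rw [hu]; field_simp; nlinarith
  have hug : Real.sqrt 3 - 1 < u := by
    have h1 : s < x + 3 - 2*Real.sqrt 3 := by nlinarith
    rw [hu]; nlinarith
  have hcube : 2 ≤ u^3 + 3*u^2 := by
    nlinarith [mul_pos (mul_pos hu0 hu0) hu0, sq_nonneg (u - (Real.sqrt 3 - 1)),
      mul_nonneg (sq_nonneg (u - (Real.sqrt 3 - 1))) hu0.le]
  refine ⟨Real.sqrt u, Real.sqrt_pos.2 hu0, ?_, ?_, ?_⟩
  · exact (Real.sqrt_lt' one_pos).2 (by nlinarith)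
  · have h := Real.sq_sqrt hu0.le
    calc (2:ℝ) ≤ u^3 + 3*u^2 := hcube
      _ = (Real.sqrt u)^6 + 3*(Real.sqrt u)^4 := by
          rw [show (Real.sqrt u)^6 = ((Real.sqrt u)^2)^3 by ring,
            show (Real.sqrt u)^4 = ((Real.sqrt u)^2)^2 by ring, h]
  · have h := Real.sq_sqrt hu0.le
    rw [h]
    have hun : u ≠ 0 := ne_of_gt hu0
    field_simp
    nlinarith

private lemma stmt6_degen {Ω : Type*} [MeasureSpace Ω] [IsProbabilityMeasure (ℙ : Measure Ω)]
    (ξ : Ω → ℝ) (hmeas : Measurable ξ)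
    (hint : Integrable ξ) (hint4 : Integrable (fun ω => (ξ ω) ^ 4))
    (hmean : (∫ ω, ξ ω) = 0) (h2 : (∫ ω, (ξ ω) ^ 2) = 1)
    (h4 : (∫ ω, (ξ ω) ^ 4) = 1) :
    (1:ℝ)/2 ≤ (ℙ {ω | 0 < ξ ω}).toReal := by
  have hAm : MeasurableSet {ω | 0 < ξ ω} := hmeas measurableSet_Ioi
  set A : Set Ω := {ω | 0 < ξ ω} with hAdef
  have hint2 : Integrable (fun ω => (ξ ω)^2) := stmt6_integrable_sq ξ hmeas hint4
  have hintInd : Integrable (A.indicator (fun _ => (1:ℝ))) :=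
    (integrable_const 1).indicator hAm
  have esub : Integrable (fun ω => (ξ ω)^4 - 2*(ξ ω)^2) := hint4.sub (hint2.const_mul 2)
  have hiq : Integrable (fun ω => ((ξ ω)^2 - 1)^2) := by
    have heq : (fun ω => ((ξ ω)^2 - 1)^2)
        = (fun ω => ((ξ ω)^4 - 2*(ξ ω)^2) + 1) := funext fun ω => by ring
    rw [heq]
    exact esub.add (integrable_const 1)
  have h0 : (∫ ω, ((ξ ω)^2 - 1)^2) = 0 := by
    have heq : (fun ω => ((ξ ω)^2 - 1)^2)
        = (fun ω => ((ξ ω)^4 - 2*(ξ ω)^2) + 1) := funext fun ω => by ring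
    rw [heq, integral_add esub (integrable_const 1), integral_sub hint4 (hint2.const_mul 2),
      integral_const_mul, h4, h2, integral_const]
    simp
    norm_num
  have hae : (fun ω => ((ξ ω)^2 - 1)^2) =ᵐ[ℙ] 0 :=
    (integral_eq_zero_iff_of_nonneg (fun ω => sq_nonneg _) hiq).1 h0
  have hsgn : ξ =ᵐ[ℙ] (fun ω => 2 * A.indicator (fun _ => (1:ℝ)) ω - 1) := by
    filter_upwards [hae] with ω hω
    simp only [Pi.zero_apply] at hω
    have h1 : (ξ ω - 1) * (ξ ω + 1) = 0 := by nlinarith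
    rcases mul_eq_zero.1 h1 with h | h
    · have hv : ξ ω = 1 := by linarith
      have hm : ω ∈ A := by rw [hAdef]; simp only [Set.mem_setOf_eq, hv]; norm_num
      rw [Set.indicator_of_mem hm, hv]; norm_num
    · have hv : ξ ω = -1 := by linarith
      have hm : ω ∉ A := by rw [hAdef]; simp only [Set.mem_setOf_eq, hv]; norm_num
      rw [Set.indicator_of_notMem hm, hv]; norm_num
  have hI : (∫ ω, (2 * A.indicator (fun _ => (1:ℝ)) ω - 1)) = 2*(ℙ A).toReal - 1 := by
    rw [integral_sub (hintInd.const_mul 2) (integrable_const 1), integral_const_mul,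
      integral_indicator hAm, integral_const, integral_const]
    simp
    rfl
  have := integral_congr_ae hsgn
  rw [hmean, hI] at this
  linarith [this.ge]

theorem stmt6 {Ω : Type*} [MeasureSpace Ω] [IsProbabilityMeasure (ℙ : Measure Ω)]
    (ξ : Ω → ℝ) (hmeas : Measurable ξ)
    (hint : Integrable ξ) (hint4 : Integrable (fun ω => (ξ ω) ^ 4))
    (hmean : (∫ ω, ξ ω) = 0) (h2 : (∫ ω, (ξ ω) ^ 2) = 1)
    (x : ℝ) (hx1 : 1 ≤ x) (hx2 : x < 3 * Real.sqrt 3 / 2 - 3 / 2)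
    (h4 : (∫ ω, (ξ ω) ^ 4) = x) :
    ENNReal.ofReal (1 / 2 - Real.sqrt ((x - 1) / (x + 3)) / 2) ≤ ℙ {ω | 0 < ξ ω} := by
  rcases hx1.eq_or_lt with hx | hx
  · -- degenerate case x = 1
    have hxe : x = 1 := hx.symm
    subst hxe
    have key := stmt6_degen ξ hmeas hint hint4 hmean h2 h4
    have hz : ((1:ℝ) - 1) / (1 + 3) = 0 := by norm_num
    rw [hz, Real.sqrt_zero]
    apply ENNReal.ofReal_le_of_le_toReal
    linarith
  · obtain ⟨a, ha0, ha1, hg, hax⟩ := stmt6_exists_a x hx hx2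
    have hb := stmt6_aux ξ hmeas hint hint4 hmean h2 a ha0 ha1 hg (by rw [h4, hax])
    have hsq : Real.sqrt ((x-1)/(x+3)) = (1-a^2)/(1+a^2) := by
      have h1 : (x-1)/(x+3) = ((1-a^2)/(1+a^2))^2 := by
        rw [← hax]
        have ha : a ≠ 0 := ne_of_gt ha0
        have hpos : (0:ℝ) < a^2 + 1/a^2 - 1 + 3 := by
          have h2 : (0:ℝ) < 1/a^2 := by positivity
          nlinarith
        rw [div_pow, div_eq_div_iff hpos.ne' (by positivity : ((1:ℝ)+a^2)^2 ≠ 0)]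
        field_simp
        ring
      rw [h1, Real.sqrt_sq (div_nonneg (by nlinarith) (by positivity))]
    rw [hsq]
    apply ENNReal.ofReal_le_of_le_toReal
    calc 1/2 - ((1-a^2)/(1+a^2))/2 = a^2/(1+a^2) := by
          have hne : (1:ℝ)+a^2 ≠ 0 := by positivity
          field_simp
          ring
      _ ≤ _ := hb
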